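/- For every m with l_1 ≤ m ≤ l_2 − 1 one has Σ_{k=l_1}^{m} (ε − k) r_k > 0. -/

import Mathlib

open scoped BigOperators

/-- If `ε` is the `r`-weighted mean of the integers `l1, …, l2` (with
weights `r_k > 0`), then for every `m` with `l1 ≤ m ≤ l2 − 1` one has
`Σ_{k=l1}^{m} (ε − k) r_k > 0`. -/
theorem partial_sum_weighted_mean_pos
    (l1 l2 : ℤ) (hl : l1 ≤ l2) (r : ℤ → ℝ)
    (hr : ∀ k ∈ Finset.Icc l1 l2, 0 < r k) (ε : ℝ)
    (hε : ε = (∑ k ∈ Finset.Icc l1 l2, (k : ℝ) * r k) / ∑ k ∈ Finset.Icc l1 l2, r k) :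
    ∀ m, l1 ≤ m → m ≤ l2 - 1 → 0 < ∑ k ∈ Finset.Icc l1 m, (ε - (k : ℝ)) * r k := by
  intro m hm1 hm2
  have hm2' : m ≤ l2 := by omega
  have hR : 0 < ∑ k ∈ Finset.Icc l1 l2, r k :=
    Finset.sum_pos hr (Finset.nonempty_Icc.mpr hl)
  have hsplit : Finset.Icc l1 m ∪ Finset.Ioc m l2 = Finset.Icc l1 l2 :=
by
    ext a
    simp only [Finset.mem_union, Finset.mem_Icc, Finset.mem_Ioc]
    omega
  have hdisj : Disjoint (Finset.Icc l1 m) (Finset.Ioc m l2) := by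
    simp only [Finset.disjoint_left, Finset.mem_Icc, Finset.mem_Ioc]
    intro a h1 h2
    omega
  have htot : ∑ k ∈ Finset.Icc l1 l2, (ε - (k:ℝ)) * r k = 0 := by
    have h1 : ∑ k ∈ Finset.Icc l1 l2, (ε - (k:ℝ)) * r k
        = ε * ∑ k ∈ Finset.Icc l1 l2, r k - ∑ k ∈ Finset.Icc l1 l2, (k:ℝ) * r k := by
      rw [Finset.mul_sum, ← Finset.sum_sub_distrib]
      exact Finset.sum_congr rfl fun k _ => by ring
    rw [h1, hε]
    field_simp
    ring
  have hsum : ∑ k ∈ Finset.Icc l1 m, (ε - (k:ℝ)) * r k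
      + ∑ k ∈ Finset.Ioc m l2, (ε - (k:ℝ)) * r k = 0 := by
    rw [← Finset.sum_union hdisj, hsplit, htot]
  rcases lt_or_ge (m:ℝ) ε with h | h
  · apply Finset.sum_pos
    · intro k hk
      simp only [Finset.mem_Icc] at hk
      have hk' : k ∈ Finset.Icc l1 l2 := Finset.mem_Icc.mpr ⟨hk.1, le_trans hk.2 hm2'⟩
      have hkm : (k:ℝ) ≤ m := by exact_mod_cast hk.2
      exact mul_pos (by linarith) (hr k hk')
    · exact Finset.nonempty_Icc.mpr hm1
  · have hneg : ∑ k ∈ Finset.Ioc m l2, (ε - (k:ℝ)) * r k < 0 := by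
      apply Finset.sum_neg
      · intro k hk
        simp only [Finset.mem_Ioc] at hk
        have hk' : k ∈ Finset.Icc l1 l2 := Finset.mem_Icc.mpr ⟨by omega, hk.2⟩
        have hkm : (m:ℝ) < k := by exact_mod_cast hk.1
        exact mul_neg_of_neg_of_pos (by linarith) (hr k hk')
      · exact Finset.nonempty_Ioc.mpr (by omega)
    linarith
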